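/- Let 𝔫 be a finite-dimensional real Lie algebra of compact type of dimension n ≥ 3, regarded as the inner product space V = 𝔫 with ⟨·,·⟩ = −B and with Lie bracket ρ(a,b) = [a,b]. Then the pair γ₀(a) := (1/2)·ad(a), γ₁(a) := −(1/(8(n−1)))·⟨a,·⟩ is a connection form which is normal with respect to ρ. (This is the normal conformal Cartan connection form of the bi-invariant metric in the left-invariant trivialisation: γ_nor(a) = (1/2)ρ(a,·) − (1/(8(n−1)))a*.) -/

import Mathlib

open Finset

noncomputable section

variable {V : Type*} [AddCommGroup V] [Module ℝ V]

/-- `β(a,l) x := l(x) • a - ⟨a,x⟩ • l♯ + l(a) • x`, where `ip` is the inner product of `V`,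
`l` a linear functional and `lSharp` its metric dual (the unique vector with
`ip lSharp x = l x` for all `x`); this realises the bracket `[a,l]` of `𝔪₋₁` with `𝔪₁`
inside `𝔰𝔬(1,n+1)`, acting on `𝔪₋₁ ≅ V`. -/
def mBracket (ip : V → V → ℝ) (a : V) (l : V → ℝ) (lSharp : V) (x : V) : V :=
  l x • a - ip a x • lSharp + l a • x

/-- The 0-curvature `κ₀(a,b) := -γ₀(ρ(a,b)) + γ₀(a)∘γ₀(b) - γ₀(b)∘γ₀(a)
+ β(a,γ₁(b)) - β(b,γ₁(a))` of a connection form `(γ₀, γ₁)` with respect to a Lie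
bracket `ρ` on `V`; here `sh a` denotes the metric dual of the functional `γ₁ a`. -/
def kappaZero (ip : V → V → ℝ) (ρ : V → V → V) (γ₀ : V → Module.End ℝ V)
    (γ₁ : V → V → ℝ) (sh : V → V) (a b x : V) : V :=
  -(γ₀ (ρ a b) x) + γ₀ a (γ₀ b x) - γ₀ b (γ₀ a x)
    + mBracket ip a (γ₁ b) (sh b) x - mBracket ip b (γ₁ a) (sh a) x

end

/-- Let `𝔫` be a finite-dimensional real Lie algebra of compact type of
dimension `n ≥ 3`, regarded as the inner product space `V = 𝔫` with `⟨x,y⟩ = -B x y`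
(Killing form `B`) and with Lie bracket `ρ(a,b) = ⁅a,b⁆`.  Then the pair
`γ₀(a) := (1/2) • ad a`, `γ₁(a) := -(1/(8(n-1))) • ⟨a,·⟩` (whose metric dual is
`-(1/(8(n-1))) • a`) is a connection form — each `γ₀(a)` lies in `𝔠𝔬(V)` — which is
normal with respect to `ρ`: it is torsion-free and its 0-curvature `κ₀` satisfies the
trace condition `∑ i, ⟨κ₀(eᵢ,a)b, eᵢ⟩ = 0` for an orthonormal basis `(eᵢ)`. -/
theorem biinvariant_normal_cartan_connection_form
    (𝔫 : Type*) [LieRing 𝔫] [LieAlgebra ℝ 𝔫] [Module.Finite ℝ 𝔫]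
    (hB : ∀ x : 𝔫, x ≠ 0 → killingForm ℝ 𝔫 x x < 0)
    (n : ℕ) (hn : 3 ≤ n) (e : Module.Basis (Fin n) ℝ 𝔫)
    (he : ∀ i j, -killingForm ℝ 𝔫 (e i) (e j) = if i = j then 1 else 0) :
    (∀ a : 𝔫, ∃ c : ℝ, ∀ x y : 𝔫,
        -killingForm ℝ 𝔫 ((1 / 2 : ℝ) • LieAlgebra.ad ℝ 𝔫 a x) y
          + -killingForm ℝ 𝔫 x ((1 / 2 : ℝ) • LieAlgebra.ad ℝ 𝔫 a y)
          = c * (-killingForm ℝ 𝔫 x y)) ∧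
    (∀ a b : 𝔫,
        ⁅a, b⁆ = (1 / 2 : ℝ) • LieAlgebra.ad ℝ 𝔫 a b - (1 / 2 : ℝ) • LieAlgebra.ad ℝ 𝔫 b a) ∧
    (∀ a b : 𝔫,
        ∑ i, -killingForm ℝ 𝔫
            (kappaZero (fun x y : 𝔫 => -killingForm ℝ 𝔫 x y)
              (fun x y : 𝔫 => ⁅x, y⁆)
              (fun x : 𝔫 => (1 / 2 : ℝ) • LieAlgebra.ad ℝ 𝔫 x)
              (fun x y : 𝔫 => -(1 / (8 * ((n : ℝ) - 1))) * (-killingForm ℝ 𝔫 x y))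
              (fun x : 𝔫 => -(1 / (8 * ((n : ℝ) - 1))) • x)
              (e i) a b)
            (e i) = 0) := by
  set K := killingForm ℝ 𝔫 with hK
  set c : ℝ := -(1 / (8 * ((n : ℝ) - 1))) with hc
  have hsymm : ∀ x y : 𝔫, K x y = K y x := LieModule.traceForm_comm ℝ 𝔫 𝔫
  have hinv : ∀ x y z : 𝔫, K ⁅x,y⁆ z = K x ⁅y,z⁆ := LieModule.traceForm_apply_lie_apply ℝ 𝔫 𝔫
  have hinv' : ∀ x y z : 𝔫, K ⁅x,y⁆ z = -K y ⁅x,z⁆ := LieModule.traceForm_apply_lie_apply' ℝ 𝔫 𝔫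
  have hrepr : ∀ (x : 𝔫) (i : Fin n), -K (e i) x = e.repr x i := by
    intro x i
    have h1 : (-(K (e i)) : 𝔫 →ₗ[ℝ] ℝ) = e.coord i := by
      apply e.ext
      intro j
      rw [Module.Basis.coord_apply, Module.Basis.repr_self, Finsupp.single_apply]
      simpa [eq_comm] using he i j
    simpa using LinearMap.congr_fun h1 x
  have htr : ∀ f : Module.End ℝ 𝔫, ∑ i, -K (e i) (f (e i)) = LinearMap.trace ℝ 𝔫 f := by
    intro f
    rw [LinearMap.trace_eq_matrix_trace ℝ e f, Matrix.trace]
    simp [Matrix.diag, LinearMap.toMatrix_apply, hrepr]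
  have hsum2 : ∀ x y : 𝔫, ∑ i, (-K (e i) x) * (-K (e i) y) = -K x y := by
    intro x y
    conv_rhs => rw [← e.sum_repr x]
    rw [map_sum, LinearMap.sum_apply, ← Finset.sum_neg_distrib]
    refine Finset.sum_congr rfl fun i _ => ?_
    rw [map_smul, LinearMap.smul_apply, smul_eq_mul, ← hrepr x i]
    ring
  have hadad : ∀ a b : 𝔫, ∑ i, -K (e i) ⁅a, ⁅b, e i⁆⁆ = K a b := by
    intro a b
    have := htr (LieAlgebra.ad ℝ 𝔫 a ∘ₗ LieAlgebra.ad ℝ 𝔫 b)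
    simp only [LinearMap.comp_apply, LieAlgebra.ad_apply] at this
    rw [this, hK, killingForm_apply_apply]
  refine ⟨?_, ?_, ?_⟩
  · intro a
    refine ⟨0, fun x y => ?_⟩
    simp only [LinearMap.smul_apply, map_smul, smul_eq_mul, LieAlgebra.ad_apply]
    rw [hinv' a x y]
    ring
  · intro a b
    simp only [LinearMap.smul_apply, LieAlgebra.ad_apply]
    rw [← lie_skew b a, smul_neg, sub_neg_eq_add, ← add_smul]
    norm_num
  · intro a b
    have hvec : ∀ i : Fin n,
        kappaZero (fun x y : 𝔫 => -K x y) (fun x y : 𝔫 => ⁅x, y⁆)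
          (fun x : 𝔫 => (1 / 2 : ℝ) • LieAlgebra.ad ℝ 𝔫 x)
          (fun x y : 𝔫 => c * (-K x y)) (fun x : 𝔫 => c • x) (e i) a b
        = (-(1/4) : ℝ) • ⁅⁅e i, a⁆, b⁆ + (2 * (c * (-K a b))) • e i
            + (-(2 * (c * (-K (e i) b)))) • a := by
      intro i
      simp only [kappaZero, mBracket, LinearMap.smul_apply, LieAlgebra.ad_apply, lie_smul,
        smul_smul]
      rw [leibniz_lie (e i) a b, hsymm a (e i)]
      module
    have hterm : ∀ i : Fin n,
        -K (kappaZero (fun x y : 𝔫 => -K x y) (fun x y : 𝔫 => ⁅x, y⁆)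
            (fun x : 𝔫 => (1 / 2 : ℝ) • LieAlgebra.ad ℝ 𝔫 x)
            (fun x y : 𝔫 => c * (-K x y)) (fun x : 𝔫 => c • x) (e i) a b) (e i)
        = -(1/4) * (-K (e i) ⁅a, ⁅b, e i⁆⁆) + (2 * (c * (-K a b))) * (-K (e i) (e i))
            + (-(2 * c)) * ((-K (e i) a) * (-K (e i) b)) := by
      intro i
      rw [hvec i]
      simp only [map_add, map_smul, LinearMap.add_apply, LinearMap.smul_apply, smul_eq_mul]
      rw [hinv ⁅e i, a⁆ b (e i), hinv (e i) a ⁅b, e i⁆, hsymm a (e i)]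
      ring
    rw [Finset.sum_congr rfl fun i _ => hterm i]
    rw [Finset.sum_add_distrib, Finset.sum_add_distrib, ← Finset.mul_sum, ← Finset.mul_sum,
      ← Finset.mul_sum, hadad a b, hsum2]
    have h2 : ∑ i : Fin n, -K (e i) (e i) = (n : ℝ) := by
      simp only [he]
      simp
    rw [h2]
    have hn1 : ((n : ℝ) - 1) ≠ 0 := by
      have : (3 : ℝ) ≤ (n : ℝ) := by exact_mod_cast hn
      nlinarith
    rw [hc]
    field_simp
    ring
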